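/- Let m be a positive integer with prime factorization m = p_1^{α_1} p_2^{α_2} ⋯ p_r^{α_r}, where p_1, …, p_r are r ≥ 2 distinct primes. Then there exists a constant c > 0 (depending only on m) such that for every n ≥ 1 there is a multilinear polynomial P with integer coefficients in n variables, of total degree at most c · n^{1/r}, which weakly represents OR_n modulo m. -/

import Mathlib

open MvPolynomial Finset

/-- A multilinear polynomial: every variable occurs to degree at most 1 in every monomial. -/
def IsMultilinear {n : ℕ} (P : MvPolynomial (Fin n) ℤ) : Prop :=
  ∀ d ∈ P.support, ∀ i, d i ≤ 1

/-- squish an exponent vector to a 0/1 exponent vector -/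
noncomputable def squish {n : ℕ} (d : Fin n →₀ ℕ) : Fin n →₀ ℕ :=
  d.mapRange (min 1) (by simp)

/-- multilinearization -/
noncomputable def ML {n : ℕ} (P : MvPolynomial (Fin n) ℤ) : MvPolynomial (Fin n) ℤ :=
  ∑ d ∈ P.support, MvPolynomial.monomial (squish d) (P.coeff d)

lemma ML_multilinear {n : ℕ} (P : MvPolynomial (Fin n) ℤ) : IsMultilinear (ML P) := by
  intro d hd i
  have := MvPolynomial.support_sum hd
  simp only [Finset.mem_biUnion] at this
  obtain ⟨e, _, hd2⟩ := this
  have := MvPolynomial.support_monomial_subset hd2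
  simp only [Finset.mem_singleton] at this
  subst this
  simp [squish, Finsupp.mapRange_apply]

lemma totalDegree_ML {n : ℕ} (P : MvPolynomial (Fin n) ℤ) :
    (ML P).totalDegree ≤ P.totalDegree := by
  refine (MvPolynomial.totalDegree_finset_sum _ _).trans ?_
  apply Finset.sup_le
  intro d hd
  refine (MvPolynomial.totalDegree_monomial_le _ _).trans ?_
  have h1 : ((squish d).sum fun _ => id) ≤ d.sum fun _ => id := by
    rw [Finsupp.sum_fintype _ _ (fun _ => rfl), Finsupp.sum_fintype _ _ (fun _ => rfl)]
    apply Finset.sum_le_sum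
    intro i _
    simp only [squish, Finsupp.mapRange_apply, id]
    exact min_le_right _ _
  refine h1.trans ?_
  exact MvPolynomial.le_totalDegree hd

lemma eval_ML {n : ℕ} (P : MvPolynomial (Fin n) ℤ) (x : Fin n → ℤ)
    (hx : ∀ i, x i = 0 ∨ x i = 1) :
    MvPolynomial.eval x (ML P) = MvPolynomial.eval x P := by
  rw [ML, map_sum, MvPolynomial.eval_eq' x P]
  apply Finset.sum_congr rfl
  intro d _
  rw [MvPolynomial.eval_monomial, Finsupp.prod_fintype _ _ (fun _ => pow_zero _)]
  congr 1
  apply Finset.prod_congr rfl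
  intro i _
  simp only [squish, Finsupp.mapRange_apply]
  rcases Nat.eq_zero_or_pos (d i) with h | h
  · simp [h]
  · have : min 1 (d i) = 1 := by omega
    rw [this, pow_one]
    rcases hx i with h' | h'
    · rw [h', zero_pow (by omega)]
    · rw [h', one_pow]

/-- elementary symmetric polynomial -/
noncomputable def E (n d : ℕ) : MvPolynomial (Fin n) ℤ :=
  ∑ T ∈ Finset.powersetCard d Finset.univ, ∏ i ∈ T, MvPolynomial.X i

lemma totalDegree_E (n d : ℕ) : (E n d).totalDegree ≤ d := by
  refine (MvPolynomial.totalDegree_finset_sum _ _).trans ?_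
  apply Finset.sup_le
  intro T hT
  refine (MvPolynomial.totalDegree_finset_prod _ _).trans ?_
  have : ∀ i ∈ T, (MvPolynomial.X i : MvPolynomial (Fin n) ℤ).totalDegree ≤ 1 :=
    fun i _ => le_of_eq (MvPolynomial.totalDegree_X i)
  calc ∑ i ∈ T, (MvPolynomial.X i : MvPolynomial (Fin n) ℤ).totalDegree
      ≤ ∑ _i ∈ T, 1 := Finset.sum_le_sum this
    _ = T.card := by simp
    _ = d := (Finset.mem_powersetCard.mp hT).2

/-- weight of a 0/1 vector -/
noncomputable def wt {n : ℕ} (x : Fin n → ℤ) : ℕ := (Finset.univ.filter fun i => x i = 1).card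

lemma eval_E {n : ℕ} (x : Fin n → ℤ) (hx : ∀ i, x i = 0 ∨ x i = 1) (d : ℕ) :
    MvPolynomial.eval x (E n d) = (Nat.choose (wt x) d : ℤ) := by
  classical
  rw [E, map_sum]
  set A : Finset (Fin n) := Finset.univ.filter fun i => x i = 1 with hA
  have key : ∀ T ∈ Finset.powersetCard d (Finset.univ : Finset (Fin n)),
      MvPolynomial.eval x (∏ i ∈ T, MvPolynomial.X i) = if T ⊆ A then 1 else 0 := by
    intro T _
    rw [map_prod]
    simp only [MvPolynomial.eval_X]
    by_cases h : T ⊆ A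
    · rw [if_pos h]
      apply Finset.prod_eq_one
      intro i hi
      have := h hi
      rw [hA] at this
      simpa using this
    · rw [if_neg h]
      obtain ⟨i, hi, hiA⟩ := Finset.not_subset.mp h
      apply Finset.prod_eq_zero hi
      rcases hx i with h' | h'
      · exact h'
      · exfalso; exact hiA (by simp [hA, h'])
  rw [Finset.sum_congr rfl key, Finset.sum_boole]
  have : Finset.filter (fun T => T ⊆ A) (Finset.powersetCard d Finset.univ)
      = Finset.powersetCard d A := by
    ext T
    simp only [Finset.mem_filter, Finset.mem_powersetCard]
    constructor
    · rintro ⟨⟨-, h2⟩, h3⟩; exact ⟨h3, h2⟩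
    · rintro ⟨h1, h2⟩; exact ⟨⟨Finset.subset_univ _, h2⟩, h1⟩
  rw [this, Finset.card_powersetCard]
  rfl

lemma choose_pow_digit (p : ℕ) [Fact p.Prime] (j : ℕ) : ∀ s : ℕ,
    (Nat.choose s (p^j) : ℤ) ≡ ((s / p^j : ℕ) : ℤ) [ZMOD p] := by
  induction j with
  | zero => intro s; simp [Nat.choose_one_right]
  | succ j ih =>
    intro s
    have hp : (1:ℕ) < p := (Fact.out : p.Prime).one_lt
    have h1 : p^(j+1) % p = 0 := by rw [pow_succ]; exact Nat.mul_mod_left _ _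
    have h2 : p^(j+1) / p = p^j := by rw [pow_succ]; exact Nat.mul_div_cancel _ (by omega)
    have h := Choose.choose_modEq_choose_mod_mul_choose_div (n := s) (k := p^(j+1)) (p := p)
    rw [h1, h2, Nat.choose_zero_right] at h
    refine h.trans ?_
    have := ih (s / p)
    rw [Nat.div_div_eq_div_mul, ← pow_succ'] at this
    calc ((1 : ℕ) * ((s/p).choose (p^j)) : ℤ) = ((s/p).choose (p^j) : ℤ) := by push_cast; ring
      _ ≡ ((s / p^(j+1) : ℕ) : ℤ) [ZMOD p] := this

lemma exists_digit {p k s : ℕ} (hp : p.Prime) (hs : s ≠ 0) (h : ¬ p^k ∣ s) :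
    ∃ j < k, ¬ p ∣ (s / p^j) := by
  refine ⟨s.factorization p, ?_, Nat.not_dvd_ordCompl hp hs⟩
  by_contra hk
  push_neg at hk
  exact h ((pow_dvd_pow p hk).trans (Nat.ordProj_dvd s p))

def qv (p k s : ℕ) : ℤ := 1 - ∏ j ∈ Finset.range k, (1 - (Nat.choose s (p^j) : ℤ)^(p-1))

lemma qv_zero (p k : ℕ) (hp : 2 ≤ p) : qv p k 0 = 0 := by
  rw [qv, Finset.prod_eq_one, sub_self]
  intro j _
  rw [Nat.choose_eq_zero_of_lt (by positivity), Nat.cast_zero,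
    zero_pow (by omega), sub_zero]

lemma qv_mod (p k s : ℕ) [Fact p.Prime] (hs : s ≠ 0) (h : ¬ p^k ∣ s) :
    ((qv p k s : ℤ) : ZMod p) = 1 := by
  have hp : p.Prime := Fact.out
  obtain ⟨j, hj, hnd⟩ := exists_digit hp hs h
  have hc : ((Nat.choose s (p^j) : ℕ) : ZMod p) = ((s / p^j : ℕ) : ZMod p) := by
    have := choose_pow_digit p j s
    rw [Int.ModEq, ← ZMod.intCast_eq_intCast_iff'] at this
    exact_mod_cast this
  rw [qv]
  push_cast
  rw [Finset.prod_eq_zero (Finset.mem_range.mpr hj)]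
  · ring
  · rw [hc, ZMod.pow_card_sub_one_eq_one, sub_self]
    rw [Ne, ZMod.natCast_eq_zero_iff]
    exact hnd

lemma geom_sum_le' (p k : ℕ) (hp : 1 ≤ p) : (∑ j ∈ Finset.range k, (p-1)*p^j) ≤ p^k := by
  induction k with
  | zero => simp
  | succ k ih =>
    rw [Finset.sum_range_succ]
    have h1 : 1 + (p - 1) = p := by omega
    calc (∑ j ∈ Finset.range k, (p-1)*p^j) + (p-1)*p^k
        ≤ p^k + (p-1)*p^k := Nat.add_le_add_right ih _
      _ = (1 + (p-1)) * p^k := by ring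
      _ = p * p^k := by rw [h1]
      _ = p^(k+1) := by rw [pow_succ, mul_comm]

/-- `P` weakly represents the `n`-variable OR function modulo `m`: there is a set `S` of
least nonnegative residues mod `m` such that for every 0-1 input `x`,
`OR_n(x) = 0` (i.e. `x = 0`) iff `P(x) mod m ∈ S`. -/
def WeaklyRepresentsOR {n : ℕ} (P : MvPolynomial (Fin n) ℤ) (m : ℕ) : Prop :=
  ∃ S : Finset ℤ, (∀ s ∈ S, 0 ≤ s ∧ s < (m : ℤ)) ∧
    ∀ x : Fin n → ℤ, (∀ i, x i = 0 ∨ x i = 1) →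
      ((MvPolynomial.eval x P) % (m : ℤ) ∈ S ↔ x = 0)

/-- Barrington–Beigel–Rudich: if `m` has `r ≥ 2` distinct prime factors, then `OR_n` is
weakly representable modulo `m` by a multilinear integer polynomial of degree `O(n^{1/r})`. -/
theorem or_weak_representation_composite
    (m r : ℕ) (p α : Fin r → ℕ)
    (hr : 2 ≤ r)
    (hp : ∀ i, (p i).Prime)
    (hinj : Function.Injective p)
    (hα : ∀ i, 1 ≤ α i)
    (hm : m = ∏ i, p i ^ α i) :
    ∃ c : ℝ, 0 < c ∧
      ∀ n : ℕ, 1 ≤ n →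
        ∃ P : MvPolynomial (Fin n) ℤ,
          IsMultilinear P ∧
          (P.totalDegree : ℝ) ≤ c * (n : ℝ) ^ ((1 : ℝ) / r) ∧
          WeaklyRepresentsOR P m := by
  classical
  have hprodp_pos : (0:ℝ) < ∏ i, (p i : ℝ) :=
    Finset.prod_pos fun i _ => by exact_mod_cast (hp i).pos
  have hrpos : 0 < r := by omega
  have hm_pos : 0 < m := by
    rw [hm]; exact Finset.prod_pos fun i _ => pow_pos (hp i).pos _
  refine ⟨2 * ∏ i, (p i : ℝ), by positivity, ?_⟩
  intro n hn
  -- parameters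
  set u : ℕ := ⌈(n:ℝ) ^ ((1:ℝ)/r)⌉₊ with hu_def
  have hr0 : (r:ℝ) ≠ 0 := by positivity
  have hx_pos : (0:ℝ) < (n:ℝ) ^ ((1:ℝ)/r) := by
    apply Real.rpow_pos_of_pos; exact_mod_cast hn
  have hnr1 : (1:ℝ) ≤ (n:ℝ) ^ ((1:ℝ)/r) := by
    calc (1:ℝ) = (1:ℝ) ^ ((1:ℝ)/r) := (Real.one_rpow _).symm
      _ ≤ (n:ℝ) ^ ((1:ℝ)/r) :=
        Real.rpow_le_rpow (by norm_num) (by exact_mod_cast hn) (by positivity)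
  have hu1 : 1 ≤ u := Nat.one_le_ceil_iff.mpr hx_pos
  set k : Fin r → ℕ := fun i => Nat.clog (p i) (u+1) with hk_def
  set K : Fin r → ℕ := fun i => p i ^ k i with hK_def
  have hK_lb : ∀ i, u + 1 ≤ K i := fun i => Nat.le_pow_clog (hp i).one_lt _
  have hk1 : ∀ i, 1 ≤ k i := by
    intro i
    exact Nat.clog_pos (hp i).one_lt (by omega)
  have hK_ub : ∀ i, (K i : ℝ) ≤ (p i) * (2 * (n:ℝ)^((1:ℝ)/r)) := by
    intro i
    have h1 : p i ^ (k i - 1) ≤ u :=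
      Nat.lt_succ_iff.mp
        (Nat.pow_pred_clog_lt_self (hp i).one_lt (show 1 < u + 1 by omega))
    have h2 : K i = p i * p i ^ (k i - 1) := by
      have he : k i - 1 + 1 = k i := by have := hk1 i; omega
      calc K i = p i ^ (k i - 1 + 1) := by rw [he]
        _ = p i * p i ^ (k i - 1) := by rw [pow_succ, mul_comm]
    have hu2 : (u:ℝ) ≤ 2 * (n:ℝ)^((1:ℝ)/r) := by
      have := Nat.ceil_lt_add_one (le_of_lt hx_pos)
      rw [← hu_def] at this
      nlinarith
    rw [h2, Nat.cast_mul]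
    have hp0 : (0:ℝ) ≤ (p i : ℝ) := by positivity
    calc (p i : ℝ) * (p i ^ (k i - 1) : ℕ) ≤ (p i : ℝ) * u := by
          apply mul_le_mul_of_nonneg_left _ hp0
          exact_mod_cast h1
      _ ≤ (p i) * (2 * (n:ℝ)^((1:ℝ)/r)) := mul_le_mul_of_nonneg_left hu2 hp0
  have hN : n < ∏ i, K i := by
    have h1 : (n:ℝ) ≤ (u:ℝ)^r := by
      have h2 : ((n:ℝ) ^ ((1:ℝ)/r))^(r:ℕ) = (n:ℝ) := by
        rw [← Real.rpow_natCast ((n:ℝ)^((1:ℝ)/r)) r, ← Real.rpow_mul (by positivity),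
          one_div, inv_mul_cancel₀ hr0, Real.rpow_one]
      calc (n:ℝ) = ((n:ℝ) ^ ((1:ℝ)/r))^(r:ℕ) := h2.symm
        _ ≤ (u:ℝ)^r := pow_le_pow_left₀ (le_of_lt hx_pos) (Nat.le_ceil _) r
    have h1' : n ≤ u^r := by exact_mod_cast h1
    have h3 : u^r < (u+1)^r := Nat.pow_lt_pow_left (by omega) (by omega)
    have h4 : (u+1)^r ≤ ∏ i, K i := by
      calc (u+1)^r = ∏ _i : Fin r, (u+1) := by
            rw [Finset.prod_const, Finset.card_univ, Fintype.card_fin]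
        _ ≤ ∏ i, K i := Finset.prod_le_prod (fun i _ => by omega) (fun i _ => hK_lb i)
    omega
  -- CRT coefficients
  set M : Fin r → ℕ := fun i => ∏ j ∈ Finset.univ.erase i, p j ^ α j with hM_def
  have hpiM : ∀ i, ¬ p i ∣ M i := by
    intro i hdvd
    rw [hM_def] at hdvd
    rw [Prime.dvd_finset_prod_iff (hp i).prime] at hdvd
    obtain ⟨j, hj, hdvd⟩ := hdvd
    have := (hp i).dvd_of_dvd_pow hdvd
    have := (Nat.prime_dvd_prime_iff_eq (hp i) (hp j)).mp this
    exact (Finset.mem_erase.mp hj).1 (hinj this).symm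
  have hpiMj : ∀ i j, j ≠ i → p i ∣ M j := by
    intro i j hne
    have h1 : (p i)^(α i) ∣ M j :=
      Finset.dvd_prod_of_mem _ (Finset.mem_erase.mpr ⟨Ne.symm hne, Finset.mem_univ i⟩)
    exact dvd_trans (dvd_pow_self (p i) (by have := hα i; omega)) h1
  have hpim : ∀ i, p i ∣ m := by
    intro i
    have h1 : (p i)^(α i) ∣ m := by
      rw [hm]
      exact Finset.dvd_prod_of_mem _ (Finset.mem_univ i)
    exact dvd_trans (dvd_pow_self (p i) (by have := hα i; omega)) h1
  -- numeric function
  set f : ℕ → ℤ := fun s => ∑ i, (M i : ℤ)^(p i - 1) * qv (p i) (k i) s with hf_def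
  have hf0 : f 0 = 0 := by
    rw [hf_def]
    apply Finset.sum_eq_zero
    intro i _
    rw [qv_zero _ _ (hp i).two_le, mul_zero]
  have hfs : ∀ s : ℕ, s ≠ 0 → s ≤ n → ¬ (m:ℤ) ∣ f s := by
    intro s hs hsn hdvd
    -- find i with ¬ K i ∣ s
    have hex : ∃ i, ¬ K i ∣ s := by
      by_contra hall
      push_neg at hall
      have hcop : Pairwise (Function.onFun IsCoprime fun i => (K i : ℤ)) := by
        intro i j hij
        simp only [Function.onFun]
        rw [Nat.isCoprime_iff_coprime]
        exact Nat.Coprime.pow _ _ ((Nat.coprime_primes (hp i) (hp j)).mpr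
          (fun h => hij (hinj h)))
      have := Fintype.prod_dvd_of_coprime (z := (s:ℤ)) hcop (fun i => by exact_mod_cast hall i)
      rw [← Nat.cast_prod] at this
      have hdvd' : (∏ i, K i) ∣ s := by exact_mod_cast this
      have := Nat.le_of_dvd (by omega) hdvd'
      omega
    obtain ⟨i, hKi⟩ := hex
    haveI : Fact (p i).Prime := ⟨hp i⟩
    have hcast : ((f s : ℤ) : ZMod (p i)) = 1 := by
      rw [hf_def]
      push_cast
      rw [Finset.sum_eq_single i]
      · rw [qv_mod (p i) (k i) s hs hKi, mul_one]
        apply ZMod.pow_card_sub_one_eq_one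
        have : ¬ ((p i :ℕ) ∣ (M i : ℕ)) := hpiM i
        rw [Ne, ZMod.natCast_eq_zero_iff]
        exact this
      · intro j _ hji
        have : ((M j : ℕ) : ZMod (p i)) = 0 := by
          rw [ZMod.natCast_eq_zero_iff]
          exact hpiMj i j hji
        rw [this, zero_pow (by have := (hp j).two_le; omega), zero_mul]
      · intro h; exact absurd (Finset.mem_univ i) h
    have : ((f s : ℤ) : ZMod (p i)) = 0 := by
      rw [ZMod.intCast_zmod_eq_zero_iff_dvd]
      exact dvd_trans (by exact_mod_cast hpim i) hdvd
    rw [hcast] at this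
    exact one_ne_zero this
  -- the polynomial
  set R : MvPolynomial (Fin n) ℤ :=
    ∑ i, MvPolynomial.C ((M i : ℤ)^(p i - 1)) *
      (1 - ∏ j ∈ Finset.range (k i), (1 - (E n (p i ^ j))^(p i - 1))) with hR_def
  have heval : ∀ x : Fin n → ℤ, (∀ i, x i = 0 ∨ x i = 1) →
      MvPolynomial.eval x R = f (wt x) := by
    intro x hx
    rw [hR_def, map_sum, hf_def]
    apply Finset.sum_congr rfl
    intro i _
    rw [map_mul, MvPolynomial.eval_C, map_sub, map_one, map_prod, qv]
    congr 1
    congr 1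
    apply Finset.prod_congr rfl
    intro j _
    rw [map_sub, map_one, map_pow, eval_E x hx]
  have hdegR : ∀ i, (MvPolynomial.C ((M i : ℤ)^(p i - 1)) *
      (1 - ∏ j ∈ Finset.range (k i), (1 - (E n (p i ^ j))^(p i - 1)))).totalDegree ≤ K i := by
    intro i
    refine (MvPolynomial.totalDegree_mul _ _).trans ?_
    rw [MvPolynomial.totalDegree_C, zero_add]
    refine (MvPolynomial.totalDegree_sub _ _).trans ?_
    rw [MvPolynomial.totalDegree_one]
    rw [max_le_iff]
    constructor
    · omega
    refine (MvPolynomial.totalDegree_finset_prod _ _).trans ?_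
    have hterm : ∀ j ∈ Finset.range (k i),
        (1 - (E n (p i ^ j))^(p i - 1)).totalDegree ≤ (p i - 1) * p i ^ j := by
      intro j _
      refine (MvPolynomial.totalDegree_sub _ _).trans ?_
      rw [MvPolynomial.totalDegree_one, max_le_iff]
      refine ⟨by omega, ?_⟩
      refine (MvPolynomial.totalDegree_pow _ _).trans ?_
      exact Nat.mul_le_mul_left _ (totalDegree_E n _)
    calc ∑ j ∈ Finset.range (k i), (1 - (E n (p i ^ j))^(p i - 1)).totalDegree
        ≤ ∑ j ∈ Finset.range (k i), (p i - 1) * p i ^ j := Finset.sum_le_sum hterm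
      _ ≤ p i ^ k i := geom_sum_le' (p i) (k i) (hp i).one_le
      _ = K i := rfl
  have hdeg : R.totalDegree ≤ Finset.univ.sup K := by
    refine (MvPolynomial.totalDegree_finset_sum _ _).trans ?_
    apply Finset.sup_le
    intro i _
    exact le_trans (hdegR i) (Finset.le_sup (Finset.mem_univ i))
  refine ⟨ML R, ML_multilinear R, ?_, ?_⟩
  · -- degree bound
    haveI : Nonempty (Fin r) := ⟨⟨0, by omega⟩⟩
    obtain ⟨i0, -, hsup⟩ := Finset.exists_mem_eq_sup Finset.univ
      (Finset.univ_nonempty (α := Fin r)) K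
    have h1 : (ML R).totalDegree ≤ K i0 := by
      refine (totalDegree_ML R).trans (hdeg.trans ?_)
      rw [hsup]
    calc ((ML R).totalDegree : ℝ) ≤ (K i0 : ℝ) := by exact_mod_cast h1
      _ ≤ (p i0) * (2 * (n:ℝ)^((1:ℝ)/r)) := hK_ub i0
      _ ≤ ((∏ i, p i : ℕ) : ℝ) * (2 * (n:ℝ)^((1:ℝ)/r)) := by
          apply mul_le_mul_of_nonneg_right _ (by positivity)
          exact_mod_cast Finset.single_le_prod'
            (fun i (_ : i ∈ Finset.univ) => (hp i).one_le) (Finset.mem_univ i0)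
      _ = 2 * (∏ i, (p i : ℝ)) * (n:ℝ)^((1:ℝ)/r) := by push_cast; ring
  · -- weak representation
    refine ⟨{0}, ?_, ?_⟩
    · intro s hs
      rw [Finset.mem_singleton] at hs
      subst hs
      exact ⟨le_refl 0, by exact_mod_cast hm_pos⟩
    · intro x hx
      rw [eval_ML R x hx, heval x hx, Finset.mem_singleton]
      have hwt : wt x = 0 ↔ x = 0 := by
        constructor
        · intro h
          funext i
          rcases hx i with h' | h'
          · exact h'
          · exfalso
            have : i ∈ Finset.univ.filter fun i => x i = 1 := by
              simp [h']
            rw [wt] at h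
            rw [Finset.card_eq_zero] at h
            rw [h] at this
            exact absurd this (Finset.notMem_empty i)
        · intro h
          subst h
          rw [wt]
          rw [Finset.card_eq_zero]
          ext i
          simp
      constructor
      · intro h
        rw [← hwt]
        by_contra hne
        have hle : wt x ≤ n := by
          rw [wt]
          calc (Finset.univ.filter fun i => x i = 1).card ≤ Finset.univ.card :=
              Finset.card_filter_le _ _
            _ = n := by rw [Finset.card_univ, Fintype.card_fin]
        exact hfs (wt x) hne hle (Int.dvd_of_emod_eq_zero h)
      · intro h
        have : wt x = 0 := hwt.mpr h
        rw [this, hf0]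
        simp
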